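/- arXiv:2004.05065 — 7 statements merged into one kernel-verified Lean document; each statement's English description precedes it below -/
import Mathlib

section
/- There exist a finite database D with |D| = n+1 (n ≥ 1), and a notion of stabilizing set and derivability such that the minimum stabilizing set has size 1 but every stabilizing set consisting only of derivable tuples has size n. Concretely: let D = {a₁,…,aₙ, b}; a set S stabilizes D iff b ∈ S or {a₁,…,aₙ} ⊆ S; derivable tuples are exactly a₁,…,aₙ. Then the minimum stabilizing set has size 1 while the minimum stabilizing set contained in the derivable tuples has size n. -/
/-- Gap between independent and operational semantics: on `D = {a₁,…,aₙ,b}`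
with `Stab S ↔ b ∈ S ∨ {a₁,…,aₙ} ⊆ S` and derivable tuples `{a₁,…,aₙ}`,
the minimum stabilizing set has size 1, but every stabilizing set contained in
the derivable tuples has size at least `n` (and one of size `n` exists). -/
theorem stmt_4 (n : ℕ) (hn : 1 ≤ n)
    (Stab : Finset (Fin (n + 1)) → Prop)
    (hStab : ∀ S, Stab S ↔ (Fin.last n ∈ S ∨ ∀ i, i ≠ Fin.last n → i ∈ S))
    (Der : Finset (Fin (n + 1))) (hDer : Der = Finset.univ.filter (· ≠ Fin.last n)) :
    (∃ S, Stab S ∧ S.card = 1 ∧ ∀ S', Stab S' → 1 ≤ S'.card) ∧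
    (∃ S ⊆ Der, Stab S ∧ S.card = n) ∧
    (∀ S ⊆ Der, Stab S → n ≤ S.card) := by
  have hDerCard : Der.card = n := by
    have : Der = Finset.univ \ {Fin.last n} := by
      rw [hDer]; ext i; simp [Finset.mem_filter]
    rw [this, Finset.card_sdiff_of_subset (by simp)]
    simp
  have hlast : Fin.last n ∉ Der := by simp [hDer]
  have h0 : (0 : Fin (n+1)) ≠ Fin.last n := by
    intro h
    have : (Fin.last n : Fin (n+1)).val = 0 := by rw [← h]; rfl
    simp [Fin.last] at this; omega
  refine ⟨⟨{Fin.last n}, ?_, by simp, ?_⟩, ⟨Der, le_refl _, ?_, hDerCard⟩, ?_⟩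
  · rw [hStab]; left; simp
  · intro S' hS'
    rw [hStab] at hS'
    rcases hS' with h | h
    · exact Finset.card_pos.mpr ⟨_, h⟩
    · exact Finset.card_pos.mpr ⟨0, h 0 h0⟩
  · rw [hStab]; right; intro i hi; simp [hDer, hi]
  · intro S hS hStabS
    rw [hStab] at hStabS
    rcases hStabS with h | h
    · exact absurd (hS h) hlast
    · have : Der ⊆ S := by
        intro i hi
        rw [hDer, Finset.mem_filter] at hi
        exact h i hi.2
      calc n = Der.card := hDerCard.symm
        _ ≤ S.card := Finset.card_le_card this
end

section
/- Let D = {a, b} with two rules: rule 1 deletes a when both a and b are present, rule 2 deletes b when both a and b are present. Then there are exactly two minimum stabilizing sets, {a} and {b}, both of size 1; in particular the minimum stabilizing set is not unique. -/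
/-- Non-uniqueness of the minimum stabilizing set: for `D = {a, b}` with both
rules requiring `a` and `b` live, the minimum stabilizing sets are exactly
`{a}` and `{b}`, which are distinct. -/
theorem stmt_11 {α : Type*} (a b : α) (hab : a ≠ b)
    (Stab : Set α → Prop) (hStab : ∀ S, Stab S ↔ a ∈ S ∨ b ∈ S) :
    (∀ S ⊆ ({a, b} : Set α),
      ((Stab S ∧ ∀ S' ⊆ ({a, b} : Set α), Stab S' → S.ncard ≤ S'.ncard) ↔
        (S = {a} ∨ S = {b}))) ∧ ({a} : Set α) ≠ {b} := by
  have hfinD : ({a, b} : Set α).Finite := (Set.finite_singleton b).insert a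
  have hna : ({a} : Set α).ncard = 1 := Set.ncard_singleton a
  have hnb : ({b} : Set α).ncard = 1 := Set.ncard_singleton b
  have hle : ∀ S' ⊆ ({a, b} : Set α), Stab S' → 1 ≤ S'.ncard := by
    intro S' hsub hS'
    have hfin : S'.Finite := hfinD.subset hsub
    have hne : S'.Nonempty := by
      rcases (hStab S').1 hS' with h | h
      exacts [⟨a, h⟩, ⟨b, h⟩]
    exact (Set.ncard_pos hfin).2 hne
  refine ⟨fun S hsub => ?_, fun h => hab (by
    have : a ∈ ({b} : Set α) := h ▸ rfl
    simpa using this)⟩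
  constructor
  · rintro ⟨hS, hmin⟩
    have h1 : S.ncard ≤ 1 := by
      have := hmin {a} (by simp) ((hStab {a}).2 (Or.inl rfl))
      simpa [hna] using this
    have h2 : 1 ≤ S.ncard := hle S hsub hS
    have hcard : S.ncard = 1 := le_antisymm h1 h2
    obtain ⟨x, hx⟩ := Set.ncard_eq_one.1 hcard
    subst hx
    rcases hsub (Set.mem_singleton x) with h | h
    · exact Or.inl (by simp [h])
    · exact Or.inr (by simp_all)
  · rintro (rfl | rfl)
    · exact ⟨(hStab {a}).2 (Or.inl rfl), fun S' hsub' hS' => by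
        simpa [hna] using hle S' hsub' hS'⟩
    · exact ⟨(hStab {b}).2 (Or.inr rfl), fun S' hsub' hS' => by
        simpa [hnb] using hle S' hsub' hS'⟩
end

section
/- With the same abstract model (derive : Set α → Set α → α → Prop monotone in the deleted set and antitone in the live set), the stage-semantics fixpoint Stage(P,D), obtained by iterating T(S) = S ∪ {x ∈ D \ S : derive (D\S) S x} from ∅, is contained in the end-semantics fixpoint E obtained by iterating T'(S) = S ∪ {x ∈ D : derive D S x} from ∅. -/
/-- Stage semantics is contained in end semantics: if derivation is monotone in
the deleted set and antitone in the live set, every iterate of the stage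
operator from `∅` is contained in the corresponding iterate of the end
operator. -/
theorem stmt_13 {α : Type*} (D : Set α) (hD : D.Finite)
    (derive : Set α → Set α → α → Prop)
    (hmonoΔ : ∀ (L Δ Δ' : Set α) (x : α), Δ ⊆ Δ' → derive L Δ x → derive L Δ' x)
    (hantiL : ∀ (L L' Δ : Set α) (x : α), L' ⊆ L → derive L' Δ x → derive L Δ x) :
    ∀ n : ℕ,
      (fun S => S ∪ {x | x ∈ D \ S ∧ derive (D \ S) S x})^[n] ∅ ⊆
      (fun S => S ∪ {x | x ∈ D ∧ derive D S x})^[n] ∅ := by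
  intro n
  induction n with
  | zero => simp
  | succ n ih =>
    rw [Function.iterate_succ_apply', Function.iterate_succ_apply']
    intro x hx
    rcases hx with hx | ⟨⟨hxD, _⟩, hd⟩
    · exact Or.inl (ih hx)
    · refine Or.inr ⟨hxD, ?_⟩
      exact hmonoΔ _ _ _ _ ih (hantiL _ _ _ _ Set.diff_subset hd)
end

section
/- There is a concrete instance where Stage is strictly contained in End: take D = {a, b, c₁, …, cₙ} with derivation relation: Δa derivable always (when a live); Δb derivable from Δa and b live; Δcᵢ derivable from a live, Δb, and cᵢ live. Then End(P,D) = {a, b, c₁,…,cₙ} while Stage(P,D) = {a, b}; in particular Stage(P,D) ⊊ End(P,D). -/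
/-- A concrete instance where stage semantics is strictly contained in end
semantics.  `D = {0, 1, 2, …, n+1}` encodes `{a, b, c₁, …, cₙ}`; the rules are:
delete 0 when 0 is live; delete 1 when 0 is deleted and 1 is live; delete any
`x ≥ 2` when `x` and 0 are live and 1 is deleted.  Stage semantics reaches
`{0, 1}` whereas end semantics reaches all of `D`, a strict superset. -/
theorem stmt_14 (n : ℕ) (hn : 1 ≤ n)
    (D : Set ℕ) (hD : D = {x | x < n + 2})
    (derive : Set ℕ → Set ℕ → ℕ → Prop)
    (hderive : ∀ L Δ x, derive L Δ x ↔
      ((x = 0 ∧ 0 ∈ L) ∨ (x = 1 ∧ 0 ∈ Δ ∧ 1 ∈ L) ∨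
        (2 ≤ x ∧ x ∈ L ∧ 0 ∈ L ∧ 1 ∈ Δ))) :
    (∀ k : ℕ,
      (fun S => S ∪ {x | x ∈ D \ S ∧ derive (D \ S) S x})^[k + 2] ∅ = {0, 1}) ∧
    (∀ k : ℕ,
      (fun S => S ∪ {x | x ∈ D ∧ derive D S x})^[k + 3] ∅ = D) ∧
    ({0, 1} : Set ℕ) ⊂ D := by
  subst hD
  set D : Set ℕ := {x | x < n + 2} with hDdef
  set f : Set ℕ → Set ℕ :=
    fun S => S ∪ {x | x ∈ D \ S ∧ derive (D \ S) S x} with hf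
  set g : Set ℕ → Set ℕ :=
    fun S => S ∪ {x | x ∈ D ∧ derive D S x} with hg
  have hf1 : f ∅ = {0} := by
    ext x
    simp only [hf, hDdef, Set.mem_union, Set.mem_setOf_eq, Set.mem_diff,
      Set.mem_empty_iff_false, not_false_eq_true, false_and, and_false, and_true, true_and, or_false, false_or, Set.mem_singleton_iff, not_false_eq_true, false_and, and_false, and_true, true_and, or_false, false_or, true_or, or_true, not_true, hderive]
    all_goals omega
  have hf2 : f {0} = {0, 1} := by
    ext x
    simp only [hf, hDdef, Set.mem_union, Set.mem_setOf_eq, Set.mem_diff,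
      Set.mem_singleton_iff, Set.mem_insert_iff, not_false_eq_true, false_and, and_false, and_true, true_and, or_false, false_or, true_or, or_true, not_true, hderive]
    all_goals omega
  have hffix : f {0, 1} = {0, 1} := by
    ext x
    simp only [hf, hDdef, Set.mem_union, Set.mem_setOf_eq, Set.mem_diff,
      Set.mem_singleton_iff, Set.mem_insert_iff, not_false_eq_true, false_and, and_false, and_true, true_and, or_false, false_or, true_or, or_true, not_true, hderive]
    all_goals omega
  have hg1 : g ∅ = {0} := by
    ext x
    simp only [hg, hDdef, Set.mem_union, Set.mem_setOf_eq,
      Set.mem_empty_iff_false, not_false_eq_true, false_and, and_false, and_true, true_and, or_false, false_or, Set.mem_singleton_iff, not_false_eq_true, false_and, and_false, and_true, true_and, or_false, false_or, true_or, or_true, not_true, hderive]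
    all_goals omega
  have hg2 : g {0} = {0, 1} := by
    ext x
    simp only [hg, hDdef, Set.mem_union, Set.mem_setOf_eq,
      Set.mem_singleton_iff, Set.mem_insert_iff, not_false_eq_true, false_and, and_false, and_true, true_and, or_false, false_or, true_or, or_true, not_true, hderive]
    all_goals omega
  have hg3 : g {0, 1} = D := by
    ext x
    simp only [hg, hDdef, Set.mem_union, Set.mem_setOf_eq,
      Set.mem_singleton_iff, Set.mem_insert_iff, not_false_eq_true, false_and, and_false, and_true, true_and, or_false, false_or, true_or, or_true, not_true, hderive]
    all_goals omega
  have hgfix : g D = D := by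
    ext x
    simp only [hg, hDdef, Set.mem_union, Set.mem_setOf_eq, hderive]
    all_goals omega
  refine ⟨?_, ?_, ?_⟩
  · intro k
    induction k with
    | zero => simp [Function.iterate_succ_apply, hf1, hf2]
    | succ k ih =>
        rw [show k + 1 + 2 = (k + 2) + 1 from rfl, Function.iterate_succ_apply',
          ih, hffix]
  · intro k
    induction k with
    | zero => simp [Function.iterate_succ_apply, hg1, hg2, hg3]
    | succ k ih =>
        rw [show k + 1 + 3 = (k + 3) + 1 from rfl, Function.iterate_succ_apply',
          ih, hgfix]
  · constructor
    · intro x hx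
      simp only [Set.mem_insert_iff, Set.mem_singleton_iff] at hx
      simp only [hDdef, Set.mem_setOf_eq]; omega
    · intro h
      have : (2 : ℕ) ∈ ({0, 1} : Set ℕ) := h (by simp [hDdef]; omega)
      simp at this
end

section
/- There is a concrete instance where the minimum step-semantics result is strictly smaller than the stage-semantics result: take D = {a, b₁, …, bₙ}, with two rules: delete a if a and some bᵢ are both live; delete bᵢ if a and bᵢ are both live. Stage semantics deletes all of D (all rules fire simultaneously in stage 1), whereas there is a step-semantics run deleting only {a} (after which no rule fires). Hence Step(P,D) = {a} ⊊ D = Stage(P,D) for n ≥ 1. -/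
/-- A concrete instance where a step-semantics run deletes strictly fewer
tuples than stage semantics.  `D = {0, 1, …, n}` encodes `{a, b₁, …, bₙ}`;
rules: delete 0 when 0 and some `y ≥ 1` are live; delete `x ≥ 1` when 0 and
`x` are live.  Stage semantics deletes all of `D`, while the one-step run
deleting just `{0}` terminates (no rule fires afterwards), and `{0} ⊊ D`. -/
theorem stmt_15 (n : ℕ) (hn : 1 ≤ n)
    (D : Set ℕ) (hD : D = {x | x < n + 1})
    (derive : Set ℕ → Set ℕ → ℕ → Prop)
    (hderive : ∀ L Δ x, derive L Δ x ↔
      ((x = 0 ∧ 0 ∈ L ∧ ∃ y, 1 ≤ y ∧ y ∈ L) ∨ (1 ≤ x ∧ x ∈ L ∧ 0 ∈ L))) :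
    (∀ k : ℕ,
      (fun S => S ∪ {x | x ∈ D \ S ∧ derive (D \ S) S x})^[k + 1] ∅ = D) ∧
    derive D ∅ 0 ∧
    (∀ x ∈ D \ ({0} : Set ℕ), ¬ derive (D \ {0}) {0} x) ∧
    ({0} : Set ℕ) ⊂ D := by
  have h0 : (0:ℕ) ∈ D := by rw [hD]; exact Nat.succ_pos n
  have h1 : (1:ℕ) ∈ D := by rw [hD]; exact Nat.lt_succ_of_le hn
  set f := fun S => S ∪ {x | x ∈ D \ S ∧ derive (D \ S) S x} with hf
  have hfe : f ∅ = D := by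
    rw [hf]
    simp only [Set.diff_empty, Set.empty_union]
    ext x
    simp only [Set.mem_setOf_eq]
    constructor
    · rintro ⟨hx, -⟩; exact hx
    · intro hx
      refine ⟨hx, ?_⟩
      rw [hderive]
      rcases Nat.eq_zero_or_pos x with h | h
      · exact Or.inl ⟨h, h0, 1, le_refl 1, h1⟩
      · exact Or.inr ⟨h, hx, h0⟩
  have hfD : f D = D := by
    rw [hf]
    simp only [Set.diff_self]
    ext x
    simp only [Set.mem_union, Set.mem_setOf_eq, Set.mem_empty_iff_false, false_and]
    tauto
  have hiterD : ∀ k, f^[k] D = D := by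
    intro k
    induction k with
    | zero => rfl
    | succ k ih => rw [Function.iterate_succ_apply, hfD, ih]
  refine ⟨?_, ?_, ?_, ?_⟩
  · intro k
    rw [Function.iterate_succ_apply, hfe, hiterD]
  · rw [hderive]
    exact Or.inl ⟨rfl, h0, 1, le_refl 1, h1⟩
  · rintro x ⟨hx, hx0⟩ hd
    rw [hderive] at hd
    have : (0:ℕ) ∉ D \ ({0} : Set ℕ) := by simp
    rcases hd with ⟨-, h, -⟩ | ⟨-, -, h⟩ <;> exact this h
  · constructor
    · intro x hx; simp at hx; rw [hx]; exact h0
    · intro hsub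
      have := hsub h1
      simp at this
end

section
/- There is a concrete instance where stage semantics deletes strictly fewer tuples than every step-semantics run: take D = {a, b, c₁, …, cₙ} with rules: delete a if a,b live; delete b if a,b live; delete cᵢ if cᵢ live, Δa holds, and b live; delete cᵢ if cᵢ live, a live, and Δb holds. Stage semantics yields {a, b}. Every terminating step-semantics run yields a set of size n+1 (either {a, c₁,…,cₙ} or {b, c₁,…,cₙ}). Hence for n ≥ 2, |Stage(P,D)| < |Step(P,D)| and Stage(P,D) ⊄ Step(P,D). -/
/-- A concrete instance where stage semantics deletes strictly fewer tuples
than every step-semantics run.  `D = {0, 1, 2, …, n+1}` encodes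
`{a, b, c₁, …, cₙ}`; rules: delete 0 (resp. 1) when 0 and 1 are live; delete
`x ≥ 2` when `x` is live and either (0 deleted and 1 live) or (0 live and 1
deleted).  Stage semantics yields `{0, 1}`, while every terminating
step-semantics run yields a set of size `n + 1` that does not contain `{0,1}`. -/
theorem stmt_16 (n : ℕ) (hn : 2 ≤ n)
    (D : Set ℕ) (hD : D = {x | x < n + 2})
    (derive : Set ℕ → Set ℕ → ℕ → Prop)
    (hderive : ∀ L Δ x, derive L Δ x ↔
      ((x = 0 ∧ 0 ∈ L ∧ 1 ∈ L) ∨ (x = 1 ∧ 0 ∈ L ∧ 1 ∈ L) ∨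
        (2 ≤ x ∧ x ∈ L ∧ ((0 ∈ Δ ∧ 1 ∈ L) ∨ (0 ∈ L ∧ 1 ∈ Δ))))) :
    (∀ k : ℕ,
      (fun S => S ∪ {x | x ∈ D \ S ∧ derive (D \ S) S x})^[k + 1] ∅ = {0, 1}) ∧
    (∀ (T : ℕ) (S : ℕ → Set ℕ), S 0 = ∅ →
      (∀ t < T, ∃ x ∈ D \ S t, derive (D \ S t) (S t) x ∧ S (t + 1) = insert x (S t)) →
      (∀ x ∈ D \ S T, ¬ derive (D \ S T) (S T) x) →
      (S T).ncard = n + 1 ∧ ({0, 1} : Set ℕ).ncard < (S T).ncard ∧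
        ¬ ({0, 1} : Set ℕ) ⊆ S T) := by
  have hmem : ∀ x, x ∈ D ↔ x < n + 2 := by simp [hD]
  have h0D : 0 ∈ D := (hmem 0).2 (by omega)
  have h1D : 1 ∈ D := (hmem 1).2 (by omega)
  have hDfin : D.Finite := by rw [hD]; exact Set.finite_Iio _
  have hDcard : D.ncard = n + 2 := by
    have h : D = ↑(Finset.range (n + 2)) := by rw [hD]; ext x; simp
    rw [h, Set.ncard_coe_finset, Finset.card_range]
  set F : Set ℕ → Set ℕ := fun S => S ∪ {x | x ∈ D \ S ∧ derive (D \ S) S x} with hF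
  have hF0 : F ∅ = ({0, 1} : Set ℕ) := by
    ext x
    simp only [hF, Set.mem_union, Set.mem_empty_iff_false, false_or, Set.mem_setOf_eq,
      Set.mem_diff, not_false_iff, and_true, Set.mem_insert_iff, Set.mem_singleton_iff,
      hderive, Set.notMem_empty, Set.diff_empty]
    constructor
    · rintro ⟨hxD, (⟨rfl, _⟩ | ⟨rfl, _⟩ | ⟨_, _, ⟨h, _⟩ | ⟨_, h⟩⟩)⟩
      · exact Or.inl rfl
      · exact Or.inr rfl
      · exact absurd h (Set.notMem_empty 0)
      · exact absurd h (Set.notMem_empty 1)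
    · rintro (rfl | rfl)
      · exact ⟨h0D, Or.inl ⟨rfl, h0D, h1D⟩⟩
      · exact ⟨h1D, Or.inr (Or.inl ⟨rfl, h0D, h1D⟩)⟩
  have hF1 : F ({0, 1} : Set ℕ) = ({0, 1} : Set ℕ) := by
    have h0 : (0 : ℕ) ∉ D \ ({0, 1} : Set ℕ) := by simp
    have h1 : (1 : ℕ) ∉ D \ ({0, 1} : Set ℕ) := by simp
    ext x
    simp only [hF, Set.mem_union, Set.mem_setOf_eq, hderive]
    constructor
    · rintro (h | ⟨hxD, (⟨rfl, h, _⟩ | ⟨rfl, h, _⟩ | ⟨_, _, ⟨_, h⟩ | ⟨h, _⟩⟩)⟩)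
      · exact h
      · exact absurd h h0
      · exact absurd h h0
      · exact absurd h h1
      · exact absurd h h0
    · exact Or.inl
  constructor
  · intro k
    show F^[k + 1] ∅ = {0, 1}
    rw [Function.iterate_succ_apply, hF0, Function.iterate_fixed hF1]
  · intro T S hS0 hstep hstuck
    have hT1 : 1 ≤ T := by
      by_contra h
      have hT0 : T = 0 := by omega
      subst hT0
      refine hstuck 0 ⟨h0D, by simp [hS0]⟩ ?_
      rw [hderive]
      simp [hS0, h0D, h1D]
    have hsub : ∀ t, t ≤ T → S t ⊆ D := by
      intro t
      induction t with
      | zero => intro _; simp [hS0]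
      | succ t ih =>
        intro ht
        obtain ⟨x, hx, _, hS⟩ := hstep t (by omega)
        rw [hS]
        exact Set.insert_subset hx.1 (ih (by omega))
    have hinv : ∀ t, 1 ≤ t → t ≤ T →
        (0 ∈ S t ∧ 1 ∉ S t) ∨ (1 ∈ S t ∧ 0 ∉ S t) := by
      intro t
      induction t with
      | zero => omega
      | succ t ih =>
        intro _ ht
        obtain ⟨x, hx, hd, hS⟩ := hstep t (by omega)
        rcases Nat.eq_zero_or_pos t with rfl | htpos
        · rw [hderive, hS0, Set.diff_empty] at hd
          rcases hd with ⟨rfl, _⟩ | ⟨rfl, _⟩ | ⟨_, _, ⟨h, _⟩ | ⟨_, h⟩⟩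
          · left; rw [hS, hS0]; simp
          · right; rw [hS, hS0]; simp
          · exact absurd h (Set.notMem_empty 0)
          · exact absurd h (Set.notMem_empty 1)
        · rcases ih (by omega) (by omega) with ⟨h0, h1⟩ | ⟨h1, h0⟩
          · left
            have hx1 : x ≠ 1 := by
              rintro rfl
              rcases (hderive _ _ 1).1 hd with ⟨h, _⟩ | ⟨_, h, _⟩ | ⟨h, _⟩
              · exact one_ne_zero h
              · exact h.2 h0
              · omega
            rw [hS]
            exact ⟨Set.mem_insert_of_mem _ h0, by simp [hx1.symm, h1]⟩
          · right
            have hx0 : x ≠ 0 := by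
              rintro rfl
              rcases (hderive _ _ 0).1 hd with ⟨_, _, h⟩ | ⟨h, _⟩ | ⟨h, _⟩
              · exact h.2 h1
              · exact one_ne_zero h.symm
              · omega
            rw [hS]
            exact ⟨Set.mem_insert_of_mem _ h1, by simp [hx0.symm, h0]⟩
    have hpair : ({0, 1} : Set ℕ).ncard = 2 := Set.ncard_pair (by norm_num)
    rcases hinv T hT1 le_rfl with ⟨h0, h1⟩ | ⟨h1, h0⟩
    · have hST : S T = D \ {1} := by
        apply Set.Subset.antisymm
        · intro y hy
          exact ⟨hsub T le_rfl hy, by rintro rfl; exact h1 hy⟩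
        · intro y hy
          by_contra hyS
          apply hstuck y ⟨hy.1, hyS⟩
          rw [hderive]
          have hy1 : y ≠ 1 := hy.2
          have hy0 : y ≠ 0 := by rintro rfl; exact hyS h0
          exact Or.inr (Or.inr ⟨by omega, ⟨hy.1, hyS⟩, Or.inl ⟨h0, h1D, h1⟩⟩)
      have hc : (S T).ncard = n + 1 := by
        rw [hST, Set.ncard_diff_singleton_of_mem h1D, hDcard]; omega
      exact ⟨hc, by rw [hc, hpair]; omega, fun h => h1 (h (by simp))⟩
    · have hST : S T = D \ {0} := by
        apply Set.Subset.antisymm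
        · intro y hy
          exact ⟨hsub T le_rfl hy, by rintro rfl; exact h0 hy⟩
        · intro y hy
          by_contra hyS
          apply hstuck y ⟨hy.1, hyS⟩
          rw [hderive]
          have hy0 : y ≠ 0 := hy.2
          have hy1 : y ≠ 1 := by rintro rfl; exact hyS h1
          exact Or.inr (Or.inr ⟨by omega, ⟨hy.1, hyS⟩, Or.inr ⟨⟨h0D, h0⟩, h1⟩⟩)
      have hc : (S T).ncard = n + 1 := by
        rw [hST, Set.ncard_diff_singleton_of_mem h0D, hDcard]; omega
      exact ⟨hc, by rw [hc, hpair]; omega, fun h => h0 (h (by simp))⟩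
end

section
/- Let G = (V,E) be a finite graph and let S be a terminal set of a step-semantics run for the rule 'delete x if edge (x,y) exists and both x,y are live', i.e., S ⊆ V is built one vertex at a time where each added vertex has a live neighbor at the time of addition, and at termination no edge has both endpoints outside S. Then S is a vertex cover of G. Conversely, every minimal vertex cover C of G is realizable as such a terminal set. -/
/-- Step semantics for the vertex-cover delta rule: (1) every terminal set of a
step-semantics run (each step deletes a vertex with a live neighbor; at
termination no edge has both endpoints live) is a vertex cover; (2) every
minimal vertex cover is realizable as the terminal set of such a run. -/
theorem stmt_17 {V : Type*} [Fintype V] [DecidableEq V] (G : SimpleGraph V) :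
    (∀ (T : ℕ) (S : ℕ → Set V), S 0 = ∅ →
      (∀ t < T, ∃ x y, G.Adj x y ∧ x ∉ S t ∧ y ∉ S t ∧ S (t + 1) = insert x (S t)) →
      (∀ x y, G.Adj x y → x ∈ S T ∨ y ∈ S T) →
      ∀ e ∈ G.edgeSet, ∃ v ∈ S T, v ∈ e) ∧
    (∀ C : Set V, (∀ u v, G.Adj u v → u ∈ C ∨ v ∈ C) →
      (∀ C' ⊂ C, ¬ (∀ u v, G.Adj u v → u ∈ C' ∨ v ∈ C')) →
      ∃ (T : ℕ) (S : ℕ → Set V), S 0 = ∅ ∧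
        (∀ t < T, ∃ x y, G.Adj x y ∧ x ∉ S t ∧ y ∉ S t ∧ S (t + 1) = insert x (S t)) ∧
        S T = C ∧ (∀ x y, G.Adj x y → x ∈ S T ∨ y ∈ S T)) := by
  classical
  constructor
  · -- Part 1
    intro T S _ _ hterm e he
    induction e using Sym2.ind with
    | _ x y =>
      rw [SimpleGraph.mem_edgeSet] at he
      rcases hterm x y he with h | h
      · exact ⟨x, h, Sym2.mem_mk_left x y⟩
      · exact ⟨y, h, Sym2.mem_mk_right x y⟩
  · -- Part 2
    intro C hcov hmin
    -- every b ∈ C has a neighbor outside C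
    have hnbr : ∀ b ∈ C, ∃ c, G.Adj b c ∧ c ∉ C := by
      intro b hb
      have hsub : C \ {b} ⊂ C := by
        constructor
        · exact Set.diff_subset
        · intro h
          exact (h hb).2 rfl
      have := hmin (C \ {b}) hsub
      push_neg at this
      obtain ⟨u, v, huv, hu, hv⟩ := this
      rcases hcov u v huv with h | h
      · -- u ∈ C, u ∉ C \ {b}, so u = b
        have hub : u = b := by
          by_contra hne
          exact hu ⟨h, hne⟩
        have hvC : v ∉ C := by
          intro hvc
          exact hv ⟨hvc, fun hvb => G.ne_of_adj huv (hub.trans hvb.symm)⟩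
        exact ⟨v, hub ▸ huv, hvC⟩
      · have hvb : v = b := by
          by_contra hne
          exact hv ⟨h, hne⟩
        have huC : u ∉ C := by
          intro huc
          exact hu ⟨huc, fun hub => G.ne_of_adj huv (hub.trans hvb.symm ▸ rfl)⟩
        exact ⟨u, (hvb ▸ huv).symm, huC⟩
    -- enumerate C
    have hCfin : C.Finite := Set.toFinite C
    set L : List V := hCfin.toFinset.toList with hL
    have hnodup : L.Nodup := Finset.nodup_toList _
    have hmemL : ∀ v, v ∈ L ↔ v ∈ C := by
      intro v
      rw [hL, Finset.mem_toList, Set.Finite.mem_toFinset]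
    refine ⟨L.length, fun t => {v | v ∈ L.take t}, ?_, ?_, ?_, ?_⟩
    · simp
    · intro t ht
      set x := L.get ⟨t, ht⟩ with hx
      have hxL : x ∈ L := by rw [hx, List.get_eq_getElem]; exact List.getElem_mem ht
      have hxC : x ∈ C := (hmemL x).mp hxL
      obtain ⟨y, hxy, hyC⟩ := hnbr x hxC
      have hsubC : ∀ s, {v | v ∈ L.take s} ⊆ C := by
        intro s v hv
        exact (hmemL v).mp (List.mem_of_mem_take hv)
      have hxnot : x ∉ L.take t := by
        intro hmem
        obtain ⟨i, hi, hgi⟩ := List.getElem_of_mem hmem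
        have hit : i < t := by
          have := hi; rw [List.length_take] at this; omega
        have hiL : i < L.length := lt_trans hit ht
        rw [List.getElem_take] at hgi
        have hxt : x = L[t] := by rw [hx, List.get_eq_getElem]
        have : i = t := by
          have h2 : L[i] = L[t] := by rw [hgi, hxt]
          exact (List.Nodup.getElem_inj_iff hnodup).mp h2
        omega
      refine ⟨x, y, hxy, hxnot, fun h => hyC (hsubC t h), ?_⟩
      ext v
      simp only [Set.mem_setOf_eq, Set.mem_insert_iff]
      rw [List.take_succ]
      have hxt : x = L[t] := by rw [hx, List.get_eq_getElem]
      rw [List.mem_append, List.getElem?_eq_getElem ht]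
      simp only [Option.toList_some, List.mem_singleton]
      constructor
      · rintro (h | h)
        · exact Or.inr h
        · exact Or.inl (by rw [h, ← hxt])
      · rintro (h | h)
        · exact Or.inr (by rw [h, hxt])
        · exact Or.inl h
    · ext v
      simp only [Set.mem_setOf_eq, List.take_length]
      exact hmemL v
    · intro x y hxy
      have : x ∈ C ∨ y ∈ C := hcov x y hxy
      simpa [Set.mem_setOf_eq, List.take_length, hmemL] using this
end
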